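/- (Appendix B, Lemma on the decomposition of the probability quadratic form over primary cells.) For the concrete 3-D FDTD-Q region, let Δt > 0, define 𝒫 := Matrix.fromBlocks V'' (-(Δt/(2*ℏ)) • H) (-(Δt/(2*ℏ)) • H) V'' on 𝒩 ⊕ 𝒩, and for each cell c define 𝒫c := Matrix.fromBlocks Vc (-(Δt/(2*ℏ)) • Hc) (-(Δt/(2*ℏ)) • Hc) Vc on (Fin 2 × Fin 2 × Fin 2) ⊕ (Fin 2 × Fin 2 × Fin 2). Then for all ψR ψI : 𝒩 → ℝ: Sum.elim ψR ψI ⬝ᵥ 𝒫.mulVec (Sum.elim ψR ψI) = the sum over all cells c = (k,j,i) ∈ Fin nz × Fin ny × Fin nx of Sum.elim (rc ψR) (rc ψI) ⬝ᵥ 𝒫c.mulVec (Sum.elim (rc ψR) (rc ψI)). -/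

import Mathlib

open Matrix Kronecker

noncomputable section

abbrev Node (nx ny nz : ℕ) := Fin (nz+1) × Fin (ny+1) × Fin (nx+1)

/-- Triple Kronecker product with indices identified with `α × β × γ`. -/
def kron3 {α β γ : Type*} (A : Matrix α α ℝ) (B : Matrix β β ℝ) (C : Matrix γ γ ℝ) :
    Matrix (α × β × γ) (α × β × γ) ℝ :=
  Matrix.reindex (Equiv.prodAssoc α β γ) (Equiv.prodAssoc α β γ) (A ⊗ₖ B ⊗ₖ C)

/-- 1-D finite-difference matrix `W p`: `-1` at `j = castSucc i`, `+1` at `j = succ i`. -/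
def Wmat (p : ℕ) : Matrix (Fin p) (Fin (p+1)) ℝ :=
  Matrix.of fun i j => if j = Fin.castSucc i then (-1 : ℝ) else if j = Fin.succ i then 1 else 0

/-- 1-D stiffness matrix `A p = (W p)ᵀ * W p`. -/
def Amat (p : ℕ) : Matrix (Fin (p+1)) (Fin (p+1)) ℝ := (Wmat p)ᵀ * Wmat p

/-- Diagonal matrix with first and last entries `1/2`, all others `1`. -/
def Itl (p : ℕ) : Matrix (Fin (p+1)) (Fin (p+1)) ℝ :=
  Matrix.diagonal (fun i => if i = 0 ∨ i = Fin.last p then (1:ℝ)/2 else 1)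

/-- Secondary-cell volume matrix `V''`. -/
def Vsec (nx ny nz : ℕ) (Δx Δy Δz : ℝ) : Matrix (Node nx ny nz) (Node nx ny nz) ℝ :=
  Matrix.diagonal (fun p =>
    Δx * Δy * Δz * Itl nz p.1 p.1 * Itl ny p.2.1 p.2.1 * Itl nx p.2.2 p.2.2)

/-- The FDTD-Q Hamiltonian matrix `H`. -/
def Hmat (nx ny nz : ℕ) (ℏ m Δx Δy Δz : ℝ) (U : Node nx ny nz → ℝ) :
    Matrix (Node nx ny nz) (Node nx ny nz) ℝ :=
  (ℏ^2/(2*m)) • ((Δy*Δz/Δx) • kron3 (Itl nz) (Itl ny) (Amat nx)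
    + (Δx*Δz/Δy) • kron3 (Itl nz) (Amat ny) (Itl nx)
    + (Δx*Δy/Δz) • kron3 (Amat nz) (Itl ny) (Itl nx))
  + Vsec nx ny nz Δx Δy Δz * Matrix.diagonal U

/-- Diagonal matrix of reciprocal square roots of the diagonal of `V''`. -/
def Dmat (nx ny nz : ℕ) (Δx Δy Δz : ℝ) : Matrix (Node nx ny nz) (Node nx ny nz) ℝ :=
  Matrix.diagonal (fun p => 1 / Real.sqrt (Vsec nx ny nz Δx Δy Δz p p))

/-- The scaled Hamiltonian `Σ = (1/ℏ) • (D * H * D)`. -/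
def Sgm (nx ny nz : ℕ) (ℏ m Δx Δy Δz : ℝ) (U : Node nx ny nz → ℝ) :
    Matrix (Node nx ny nz) (Node nx ny nz) ℝ :=
  (1/ℏ) • (Dmat nx ny nz Δx Δy Δz * Hmat nx ny nz ℏ m Δx Δy Δz U * Dmat nx ny nz Δx Δy Δz)


/-- The corner node index `k + κ` inside `Fin (p+1)`. -/
def cornerIdx {p : ℕ} (k : Fin p) (κ : Fin 2) : Fin (p+1) :=
  ⟨k.val + κ.val, by have h1 := k.isLt; have h2 := κ.isLt; omega⟩

/-- Restriction of a nodal function to the 8 corners of the primary cell `c`. -/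
def restr {nx ny nz : ℕ} (c : Fin nz × Fin ny × Fin nx) (ψ : Node nx ny nz → ℝ) :
    Fin 2 × Fin 2 × Fin 2 → ℝ :=
  fun q => ψ (cornerIdx c.1 q.1, cornerIdx c.2.1 q.2.1, cornerIdx c.2.2 q.2.2)

/-- The 1-D single-cell stiffness matrix `Ŵ = W₁ᵀW₁`. -/
def What : Matrix (Fin 2) (Fin 2) ℝ := !![1, -1; -1, 1]

/-- The single-cell FDTD-Q Hamiltonian of the primary cell `c`. -/
def Hcell (nx ny nz : ℕ) (ℏ m Δx Δy Δz : ℝ) (U : Node nx ny nz → ℝ)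
    (c : Fin nz × Fin ny × Fin nx) :
    Matrix (Fin 2 × Fin 2 × Fin 2) (Fin 2 × Fin 2 × Fin 2) ℝ :=
  (ℏ^2/(2*m)) • ((Δy*Δz/(4*Δx)) • kron3 (1 : Matrix (Fin 2) (Fin 2) ℝ)
        (1 : Matrix (Fin 2) (Fin 2) ℝ) What
    + (Δx*Δz/(4*Δy)) • kron3 (1 : Matrix (Fin 2) (Fin 2) ℝ) What
        (1 : Matrix (Fin 2) (Fin 2) ℝ)
    + (Δx*Δy/(4*Δz)) • kron3 What (1 : Matrix (Fin 2) (Fin 2) ℝ)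
        (1 : Matrix (Fin 2) (Fin 2) ℝ))
  + (Δx*Δy*Δz/8) • Matrix.diagonal (restr c U)

/-- The single-cell volume matrix. -/
def Vcell (Δx Δy Δz : ℝ) :
    Matrix (Fin 2 × Fin 2 × Fin 2) (Fin 2 × Fin 2 × Fin 2) ℝ :=
  (Δx*Δy*Δz/8) • (1 : Matrix (Fin 2 × Fin 2 × Fin 2) (Fin 2 × Fin 2 × Fin 2) ℝ)

/-! ### Auxiliary machinery -/

section Aux

/-- The 1-D weight function: `1/2` at the two ends, `1` inside. -/
def wfun (p : ℕ) : Fin (p+1) → ℝ := fun i => if i = 0 ∨ i = Fin.last p then (1:ℝ)/2 else 1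

lemma Itl_eq (p : ℕ) : Itl p = Matrix.diagonal (wfun p) := rfl

lemma Itl_diag (p : ℕ) (i : Fin (p+1)) : Itl p i i = wfun p i := by
  simp [Itl, wfun, Matrix.diagonal_apply_eq]

lemma one2_diag : (1 : Matrix (Fin 2) (Fin 2) ℝ) = Matrix.diagonal (fun _ => (1:ℝ)) := by
  ext i j
  simp [Matrix.one_apply, Matrix.diagonal_apply]

lemma kron3_apply {α β γ : Type*} (A : Matrix α α ℝ) (B : Matrix β β ℝ) (C : Matrix γ γ ℝ)
    (a a' : α) (b b' : β) (c c' : γ) :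
    kron3 A B C (a,b,c) (a',b',c') = A a a' * B b b' * C c c' := by
  simp [kron3, mul_assoc]

lemma cornerIdx_zero {p : ℕ} (k : Fin p) : cornerIdx k 0 = k.castSucc := by
  apply Fin.ext; simp [cornerIdx]

lemma cornerIdx_one {p : ℕ} (k : Fin p) : cornerIdx k 1 = k.succ := by
  apply Fin.ext; simp [cornerIdx]

lemma W_mulVec (p : ℕ) (u : Fin (p+1) → ℝ) (k : Fin p) :
    (Wmat p *ᵥ u) k = u k.succ - u k.castSucc := by
  have hne : (Fin.castSucc k) ≠ (Fin.succ k) := (Fin.castSucc_lt_succ : k.castSucc < k.succ).ne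
  have h : ∀ j, (Wmat p) k j * u j
      = (if j = Fin.succ k then u j else 0) - (if j = Fin.castSucc k then u j else 0) := by
    intro j
    by_cases h1 : j = Fin.castSucc k <;> by_cases h2 : j = Fin.succ k <;>
      simp_all [Wmat]
  simp only [mulVec, dotProduct, h, Finset.sum_sub_distrib, Finset.sum_ite_eq',
    Finset.mem_univ, if_true]

lemma qf_Amat (p : ℕ) (u v : Fin (p+1) → ℝ) :
    ∑ c, ∑ c', u c * Amat p c c' * v c'
      = ∑ k : Fin p, (u k.succ - u k.castSucc) * (v k.succ - v k.castSucc) := by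
  have h : (∑ c, ∑ c', u c * Amat p c c' * v c') = u ⬝ᵥ (Amat p) *ᵥ v := by
    simp [dotProduct, mulVec, Finset.mul_sum, mul_assoc]
  rw [h, Amat, ← mulVec_mulVec, dotProduct_mulVec, vecMul_transpose]
  simp [dotProduct, W_mulVec]

lemma qf_What (u v : Fin 2 → ℝ) :
    ∑ c, ∑ c', u c * What c c' * v c' = (u 1 - u 0) * (v 1 - v 0) := by
  simp [What, Fin.sum_univ_two]; ring

lemma qf_diag {Z : Type*} [Fintype Z] [DecidableEq Z] (d : Z → ℝ) (ψ φ : Z → ℝ) :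
    ψ ⬝ᵥ (Matrix.diagonal d) *ᵥ φ = ∑ n, d n * (ψ n * φ n) := by
  simp [dotProduct, mulVec, diagonal, Finset.mul_sum, ite_mul, mul_ite]
  exact Finset.sum_congr rfl fun n _ => by ring

lemma qf_expand {Z : Type*} [Fintype Z] (M : Matrix Z Z ℝ) (ψ φ : Z → ℝ) :
    ψ ⬝ᵥ M *ᵥ φ = ∑ n, ∑ n', ψ n * M n n' * φ n' := by
  simp [dotProduct, mulVec, Finset.mul_sum, mul_assoc]

variable {Z Y X : Type*} [Fintype Z] [Fintype Y] [Fintype X]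
  [DecidableEq Z] [DecidableEq Y] [DecidableEq X]

lemma qf_kron3_ddC (d1 : Z → ℝ) (d2 : Y → ℝ) (C : Matrix X X ℝ) (ψ φ : Z × Y × X → ℝ) :
    ψ ⬝ᵥ (kron3 (Matrix.diagonal d1) (Matrix.diagonal d2) C) *ᵥ φ
      = ∑ a, ∑ b, d1 a * d2 b * ∑ c, ∑ c', ψ (a,b,c) * C c c' * φ (a,b,c') := by
  rw [qf_expand]
  simp only [Fintype.sum_prod_type, kron3_apply, diagonal_apply, ite_mul, mul_ite,
    zero_mul, mul_zero, Finset.sum_ite_irrel, Finset.sum_const_zero,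
    Finset.sum_ite_eq, Finset.mem_univ, if_true, Finset.mul_sum]
  refine Finset.sum_congr rfl fun a _ => Finset.sum_congr rfl fun b _ => ?_
  exact Finset.sum_congr rfl fun c _ => Finset.sum_congr rfl fun c' _ => by ring

lemma qf_kron3_dCd (d1 : Z → ℝ) (B : Matrix Y Y ℝ) (d3 : X → ℝ) (ψ φ : Z × Y × X → ℝ) :
    ψ ⬝ᵥ (kron3 (Matrix.diagonal d1) B (Matrix.diagonal d3)) *ᵥ φ
      = ∑ a, ∑ c, d1 a * d3 c * ∑ b, ∑ b', ψ (a,b,c) * B b b' * φ (a,b',c) := by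
  rw [qf_expand]
  simp only [Fintype.sum_prod_type, kron3_apply, diagonal_apply, ite_mul, mul_ite,
    zero_mul, mul_zero, Finset.sum_ite_irrel, Finset.sum_const_zero,
    Finset.sum_ite_eq, Finset.mem_univ, if_true, Finset.mul_sum]
  refine Finset.sum_congr rfl fun a _ => ?_
  rw [Finset.sum_comm]
  refine Finset.sum_congr rfl fun c _ => ?_
  exact Finset.sum_congr rfl fun b _ => Finset.sum_congr rfl fun b' _ => by ring

lemma qf_kron3_Cdd (A : Matrix Z Z ℝ) (d2 : Y → ℝ) (d3 : X → ℝ) (ψ φ : Z × Y × X → ℝ) :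
    ψ ⬝ᵥ (kron3 A (Matrix.diagonal d2) (Matrix.diagonal d3)) *ᵥ φ
      = ∑ b, ∑ c, d2 b * d3 c * ∑ a, ∑ a', ψ (a,b,c) * A a a' * φ (a',b,c) := by
  rw [qf_expand]
  simp only [Fintype.sum_prod_type, kron3_apply, diagonal_apply, ite_mul, mul_ite,
    zero_mul, mul_zero, Finset.sum_ite_irrel, Finset.sum_const_zero,
    Finset.sum_ite_eq, Finset.mem_univ, if_true, Finset.mul_sum]
  rw [Finset.sum_comm]
  refine Finset.sum_congr rfl fun b _ => ?_
  rw [Finset.sum_comm]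
  refine Finset.sum_congr rfl fun c _ => ?_
  exact Finset.sum_congr rfl fun a _ => Finset.sum_congr rfl fun a' _ => by ring

/-- 1-D corner-counting lemma. -/
lemma L1 (p : ℕ) (hp : 0 < p) (f : Fin (p+1) → ℝ) :
    ∑ x : Fin p × Fin 2, f (cornerIdx x.1 x.2) = ∑ i, 2 * wfun p i * f i := by
  have h0l : (0 : Fin (p+1)) ≠ Fin.last p := by
    intro h
    have := congrArg Fin.val h
    simp only [Fin.val_zero, Fin.val_last] at this
    omega
  have hL : ∑ x : Fin p × Fin 2, f (cornerIdx x.1 x.2)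
      = (∑ k : Fin p, f k.castSucc) + (∑ k : Fin p, f k.succ) := by
    rw [Fintype.sum_prod_type]
    simp only [Fin.sum_univ_two, cornerIdx_zero, cornerIdx_one]
    rw [Finset.sum_add_distrib]
  have hc : ∑ k : Fin p, f k.castSucc = (∑ i, f i) - f (Fin.last p) := by
    rw [Fin.sum_univ_castSucc]; ring
  have hs : ∑ k : Fin p, f k.succ = (∑ i, f i) - f 0 := by
    rw [Fin.sum_univ_succ]; ring
  have hR : ∀ i, 2 * wfun p i * f i
      = 2 * f i - (if i = 0 then f i else 0) - (if i = Fin.last p then f i else 0) := by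
    intro i
    by_cases h1 : i = 0 <;> by_cases h2 : i = Fin.last p <;> simp_all [wfun] <;> ring
  rw [hL, hc, hs, Finset.sum_congr rfl fun i _ => hR i]
  simp only [Finset.sum_sub_distrib, Finset.sum_ite_eq', Finset.mem_univ, if_true,
    ← Finset.mul_sum]
  ring

lemma Lpair {ι : Type*} [Fintype ι] (p q : ℕ) (hp : 0 < p) (hq : 0 < q)
    (s : Fin (p+1) → Fin (q+1) → ι → ℝ) :
    ∑ u : (Fin p × Fin 2) × (Fin q × Fin 2) × ι,
        s (cornerIdx u.1.1 u.1.2) (cornerIdx u.2.1.1 u.2.1.2) u.2.2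
      = ∑ z, 2 * wfun p z * ∑ y, 2 * wfun q y * ∑ i, s z y i := by
  rw [Fintype.sum_prod_type,
    L1 p hp (fun z => ∑ u : (Fin q × Fin 2) × ι, s z (cornerIdx u.1.1 u.1.2) u.2)]
  refine Finset.sum_congr rfl fun z _ => ?_
  congr 1
  rw [Fintype.sum_prod_type, L1 q hq (fun y => ∑ i, s z y i)]

lemma Ltriple (p q r : ℕ) (hp : 0 < p) (hq : 0 < q) (hr : 0 < r)
    (s : Fin (p+1) → Fin (q+1) → Fin (r+1) → ℝ) :
    ∑ u : (Fin p × Fin 2) × (Fin q × Fin 2) × (Fin r × Fin 2),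
        s (cornerIdx u.1.1 u.1.2) (cornerIdx u.2.1.1 u.2.1.2) (cornerIdx u.2.2.1 u.2.2.2)
      = ∑ z, 2 * wfun p z * ∑ y, 2 * wfun q y * ∑ x, 2 * wfun r x * s z y x := by
  rw [Fintype.sum_prod_type,
    L1 p hp (fun z => ∑ u : (Fin q × Fin 2) × (Fin r × Fin 2),
      s z (cornerIdx u.1.1 u.1.2) (cornerIdx u.2.1 u.2.2))]
  refine Finset.sum_congr rfl fun z _ => ?_
  congr 1
  rw [Fintype.sum_prod_type,
    L1 q hq (fun y => ∑ u : Fin r × Fin 2, s z y (cornerIdx u.1 u.2))]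
  refine Finset.sum_congr rfl fun y _ => ?_
  congr 1
  rw [L1 r hr (fun x => s z y x)]

/-- Reshaping equivalences. -/
def flat3e {A B C D E F : Type*} : ((A×D)×(B×E)×(C×F)) ≃ ((A×B×C)×(D×E×F)) :=
  ⟨fun u => ((u.1.1, u.2.1.1, u.2.2.1), (u.1.2, u.2.1.2, u.2.2.2)),
   fun t => ((t.1.1, t.2.1), (t.1.2.1, t.2.2.1), (t.1.2.2, t.2.2.2)),
   fun _ => rfl, fun _ => rfl⟩

def flat2x {A B C : Type*} : ((A×Fin 2)×(B×Fin 2)×C) ≃ ((A×B×C)×(Fin 2×Fin 2)) :=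
  ⟨fun u => ((u.1.1, u.2.1.1, u.2.2), (u.1.2, u.2.1.2)),
   fun t => ((t.1.1, t.2.1), (t.1.2.1, t.2.2), t.1.2.2),
   fun _ => rfl, fun _ => rfl⟩

def flat2y {A B C : Type*} : ((A×Fin 2)×(C×Fin 2)×B) ≃ ((A×B×C)×(Fin 2×Fin 2)) :=
  ⟨fun u => ((u.1.1, u.2.2, u.2.1.1), (u.1.2, u.2.1.2)),
   fun t => ((t.1.1, t.2.1), (t.1.2.2, t.2.2), t.1.2.1),
   fun _ => rfl, fun _ => rfl⟩

def flat2z {A B C : Type*} : ((B×Fin 2)×(C×Fin 2)×A) ≃ ((A×B×C)×(Fin 2×Fin 2)) :=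
  ⟨fun u => ((u.2.2, u.1.1, u.2.1.1), (u.1.2, u.2.1.2)),
   fun t => ((t.1.2.1, t.2.1), (t.1.2.2, t.2.2), t.1.1),
   fun _ => rfl, fun _ => rfl⟩


lemma count3 {nx ny nz : ℕ} (hnx : 0 < nx) (hny : 0 < ny) (hnz : 0 < nz)
    (F : (Fin nz × Fin ny × Fin nx) → (Fin 2 × Fin 2 × Fin 2) → ℝ)
    (s : Fin (nz+1) → Fin (ny+1) → Fin (nx+1) → ℝ)
    (hF : ∀ c q, F c q = s (cornerIdx c.1 q.1) (cornerIdx c.2.1 q.2.1) (cornerIdx c.2.2 q.2.2)) :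
    ∑ c, ∑ q, F c q
      = ∑ z, 2 * wfun nz z * ∑ y, 2 * wfun ny y * ∑ x, 2 * wfun nx x * s z y x := by
  calc ∑ c, ∑ q, F c q
      = ∑ t : (Fin nz × Fin ny × Fin nx) × (Fin 2 × Fin 2 × Fin 2), F t.1 t.2 :=
        (Eq.symm (Fintype.sum_prod_type _))
    _ = ∑ u : (Fin nz × Fin 2) × (Fin ny × Fin 2) × (Fin nx × Fin 2),
          s (cornerIdx u.1.1 u.1.2) (cornerIdx u.2.1.1 u.2.1.2) (cornerIdx u.2.2.1 u.2.2.2) :=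
        Fintype.sum_equiv flat3e.symm _ _ (fun t => by rw [hF]; rfl)
    _ = _ := Ltriple nz ny nx hnz hny hnx s

lemma count2x {nx ny nz : ℕ} (hny : 0 < ny) (hnz : 0 < nz)
    (F : (Fin nz × Fin ny × Fin nx) → Fin 2 → Fin 2 → ℝ)
    (s : Fin (nz+1) → Fin (ny+1) → Fin nx → ℝ)
    (hF : ∀ c κ γ, F c κ γ = s (cornerIdx c.1 κ) (cornerIdx c.2.1 γ) c.2.2) :
    ∑ c, ∑ κ, ∑ γ, F c κ γ
      = ∑ z, 2 * wfun nz z * ∑ y, 2 * wfun ny y * ∑ i, s z y i := by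
  calc ∑ c, ∑ κ, ∑ γ, F c κ γ
      = ∑ c, ∑ q : Fin 2 × Fin 2, F c q.1 q.2 :=
        Finset.sum_congr rfl fun c _ => Eq.symm (Fintype.sum_prod_type _)
    _ = ∑ t : (Fin nz × Fin ny × Fin nx) × (Fin 2 × Fin 2), F t.1 t.2.1 t.2.2 :=
        Eq.symm (Fintype.sum_prod_type _)
    _ = ∑ u : (Fin nz × Fin 2) × (Fin ny × Fin 2) × Fin nx,
          s (cornerIdx u.1.1 u.1.2) (cornerIdx u.2.1.1 u.2.1.2) u.2.2 :=
        Fintype.sum_equiv flat2x.symm _ _ (fun t => by rw [hF]; rfl)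
    _ = _ := Lpair nz ny hnz hny s

lemma count2y {nx ny nz : ℕ} (hnx : 0 < nx) (hnz : 0 < nz)
    (F : (Fin nz × Fin ny × Fin nx) → Fin 2 → Fin 2 → ℝ)
    (s : Fin (nz+1) → Fin (nx+1) → Fin ny → ℝ)
    (hF : ∀ c κ α, F c κ α = s (cornerIdx c.1 κ) (cornerIdx c.2.2 α) c.2.1) :
    ∑ c, ∑ κ, ∑ α, F c κ α
      = ∑ z, 2 * wfun nz z * ∑ x, 2 * wfun nx x * ∑ j, s z x j := by
  calc ∑ c, ∑ κ, ∑ α, F c κ α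
      = ∑ c, ∑ q : Fin 2 × Fin 2, F c q.1 q.2 :=
        Finset.sum_congr rfl fun c _ => Eq.symm (Fintype.sum_prod_type _)
    _ = ∑ t : (Fin nz × Fin ny × Fin nx) × (Fin 2 × Fin 2), F t.1 t.2.1 t.2.2 :=
        Eq.symm (Fintype.sum_prod_type _)
    _ = ∑ u : (Fin nz × Fin 2) × (Fin nx × Fin 2) × Fin ny,
          s (cornerIdx u.1.1 u.1.2) (cornerIdx u.2.1.1 u.2.1.2) u.2.2 :=
        Fintype.sum_equiv flat2y.symm _ _ (fun t => by rw [hF]; rfl)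
    _ = _ := Lpair nz nx hnz hnx s

lemma count2z {nx ny nz : ℕ} (hnx : 0 < nx) (hny : 0 < ny)
    (F : (Fin nz × Fin ny × Fin nx) → Fin 2 → Fin 2 → ℝ)
    (s : Fin (ny+1) → Fin (nx+1) → Fin nz → ℝ)
    (hF : ∀ c γ α, F c γ α = s (cornerIdx c.2.1 γ) (cornerIdx c.2.2 α) c.1) :
    ∑ c, ∑ γ, ∑ α, F c γ α
      = ∑ y, 2 * wfun ny y * ∑ x, 2 * wfun nx x * ∑ k, s y x k := by
  calc ∑ c, ∑ γ, ∑ α, F c γ α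
      = ∑ c, ∑ q : Fin 2 × Fin 2, F c q.1 q.2 :=
        Finset.sum_congr rfl fun c _ => Eq.symm (Fintype.sum_prod_type _)
    _ = ∑ t : (Fin nz × Fin ny × Fin nx) × (Fin 2 × Fin 2), F t.1 t.2.1 t.2.2 :=
        Eq.symm (Fintype.sum_prod_type _)
    _ = ∑ u : (Fin ny × Fin 2) × (Fin nx × Fin 2) × Fin nz,
          s (cornerIdx u.1.1 u.1.2) (cornerIdx u.2.1.1 u.2.1.2) u.2.2 :=
        Fintype.sum_equiv flat2z.symm _ _ (fun t => by rw [hF]; rfl)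
    _ = _ := Lpair ny nx hny hnx s

end Aux

section Decomp

variable {nx ny nz : ℕ}

/-- Decomposition of the volume quadratic form. -/
lemma decompV (hnx : 0 < nx) (hny : 0 < ny) (hnz : 0 < nz) (Δx Δy Δz : ℝ)
    (ψ φ : Node nx ny nz → ℝ) :
    ψ ⬝ᵥ (Vsec nx ny nz Δx Δy Δz) *ᵥ φ
      = ∑ c : Fin nz × Fin ny × Fin nx, restr c ψ ⬝ᵥ (Vcell Δx Δy Δz) *ᵥ restr c φ := by
  have hcell : ∀ c : Fin nz × Fin ny × Fin nx,
      restr c ψ ⬝ᵥ (Vcell Δx Δy Δz) *ᵥ restr c φ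
        = (Δx*Δy*Δz/8) * ∑ q : Fin 2 × Fin 2 × Fin 2, restr c ψ q * restr c φ q := by
    intro c
    rw [Vcell, smul_mulVec, dotProduct_smul, smul_eq_mul, one_mulVec]
    rfl
  rw [Finset.sum_congr rfl fun c _ => hcell c, ← Finset.mul_sum]
  have hre : (∑ c : Fin nz × Fin ny × Fin nx, ∑ q : Fin 2 × Fin 2 × Fin 2,
        restr c ψ q * restr c φ q)
      = ∑ z, 2 * wfun nz z * ∑ y, 2 * wfun ny y * ∑ x, 2 * wfun nx x
          * (ψ (z,y,x) * φ (z,y,x)) :=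
    count3 hnx hny hnz _ (fun z y x => ψ (z,y,x) * φ (z,y,x)) (fun c q => rfl)
  rw [hre, Vsec, qf_diag]
  simp only [Fintype.sum_prod_type, Finset.mul_sum, Itl_diag]
  refine Finset.sum_congr rfl fun z _ => Finset.sum_congr rfl fun y _ =>
    Finset.sum_congr rfl fun x _ => ?_
  ring

/-- Decomposition of the Hamiltonian quadratic form. -/
lemma decompH (hnx : 0 < nx) (hny : 0 < ny) (hnz : 0 < nz) (ℏ m Δx Δy Δz : ℝ)
    (U : Node nx ny nz → ℝ) (ψ φ : Node nx ny nz → ℝ) :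
    ψ ⬝ᵥ (Hmat nx ny nz ℏ m Δx Δy Δz U) *ᵥ φ
      = ∑ c : Fin nz × Fin ny × Fin nx,
          restr c ψ ⬝ᵥ (Hcell nx ny nz ℏ m Δx Δy Δz U c) *ᵥ restr c φ := by
  simp only [Hmat, Hcell, Vsec, Itl_eq, one2_diag, Matrix.diagonal_mul_diagonal,
    Matrix.add_mulVec, dotProduct_add, smul_mulVec, dotProduct_smul, smul_eq_mul,
    qf_kron3_ddC, qf_kron3_dCd, qf_kron3_Cdd, qf_What, qf_Amat, qf_diag, restr,
    cornerIdx_one, cornerIdx_zero, one_mul, Itl_diag, Matrix.diagonal_apply_eq]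
  rw [Finset.sum_add_distrib, ← Finset.mul_sum, ← Finset.mul_sum,
    Finset.sum_add_distrib, Finset.sum_add_distrib,
    ← Finset.mul_sum, ← Finset.mul_sum, ← Finset.mul_sum]
  have hX := count2x (nx := nx) hny hnz
    (fun c κ γ => (ψ (cornerIdx c.1 κ, cornerIdx c.2.1 γ, c.2.2.succ)
        - ψ (cornerIdx c.1 κ, cornerIdx c.2.1 γ, c.2.2.castSucc))
      * (φ (cornerIdx c.1 κ, cornerIdx c.2.1 γ, c.2.2.succ)
        - φ (cornerIdx c.1 κ, cornerIdx c.2.1 γ, c.2.2.castSucc)))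
    (fun z y i => (ψ (z,y,i.succ) - ψ (z,y,i.castSucc)) * (φ (z,y,i.succ) - φ (z,y,i.castSucc)))
    (fun c κ γ => rfl)
  have hY := count2y (ny := ny) hnx hnz
    (fun c κ α => (ψ (cornerIdx c.1 κ, c.2.1.succ, cornerIdx c.2.2 α)
        - ψ (cornerIdx c.1 κ, c.2.1.castSucc, cornerIdx c.2.2 α))
      * (φ (cornerIdx c.1 κ, c.2.1.succ, cornerIdx c.2.2 α)
        - φ (cornerIdx c.1 κ, c.2.1.castSucc, cornerIdx c.2.2 α)))
    (fun z x j => (ψ (z,j.succ,x) - ψ (z,j.castSucc,x)) * (φ (z,j.succ,x) - φ (z,j.castSucc,x)))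
    (fun c κ α => rfl)
  have hZ := count2z (nz := nz) hnx hny
    (fun c γ α => (ψ (c.1.succ, cornerIdx c.2.1 γ, cornerIdx c.2.2 α)
        - ψ (c.1.castSucc, cornerIdx c.2.1 γ, cornerIdx c.2.2 α))
      * (φ (c.1.succ, cornerIdx c.2.1 γ, cornerIdx c.2.2 α)
        - φ (c.1.castSucc, cornerIdx c.2.1 γ, cornerIdx c.2.2 α)))
    (fun y x k => (ψ (k.succ,y,x) - ψ (k.castSucc,y,x)) * (φ (k.succ,y,x) - φ (k.castSucc,y,x)))
    (fun c γ α => rfl)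
  have hU := count3 hnx hny hnz
    (fun c q => U (cornerIdx c.1 q.1, cornerIdx c.2.1 q.2.1, cornerIdx c.2.2 q.2.2)
      * (ψ (cornerIdx c.1 q.1, cornerIdx c.2.1 q.2.1, cornerIdx c.2.2 q.2.2)
        * φ (cornerIdx c.1 q.1, cornerIdx c.2.1 q.2.1, cornerIdx c.2.2 q.2.2)))
    (fun z y x => U (z,y,x) * (ψ (z,y,x) * φ (z,y,x)))
    (fun c q => rfl)
  rw [hX, hY, hZ, hU]
  simp only [Fintype.sum_prod_type]
  simp only [mul_add, Finset.mul_sum]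
  congr 1
  · congr 1
    · congr 1
      · exact Finset.sum_congr rfl fun _ _ => Finset.sum_congr rfl fun _ _ =>
          Finset.sum_congr rfl fun _ _ => by ring
      · exact Finset.sum_congr rfl fun _ _ => Finset.sum_congr rfl fun _ _ =>
          Finset.sum_congr rfl fun _ _ => by ring
    · exact Finset.sum_congr rfl fun _ _ => Finset.sum_congr rfl fun _ _ =>
        Finset.sum_congr rfl fun _ _ => by ring
  · exact Finset.sum_congr rfl fun _ _ => Finset.sum_congr rfl fun _ _ =>
      Finset.sum_congr rfl fun _ _ => by ring

end Decomp

/-- Appendix B of the paper: the probability quadratic form of the whole region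
decomposes as the sum of the single-cell probability quadratic forms over all
primary cells. -/
theorem fdtdq_probability_quadratic_form_cell_decomposition
    (nx ny nz : ℕ) (hnx : 0 < nx) (hny : 0 < ny) (hnz : 0 < nz)
    (ℏ m Δx Δy Δz : ℝ) (hℏ : 0 < ℏ) (hm : 0 < m)
    (hΔx : 0 < Δx) (hΔy : 0 < Δy) (hΔz : 0 < Δz)
    (Δt : ℝ) (hΔt : 0 < Δt)
    (U : Node nx ny nz → ℝ) :
    ∀ ψR ψI : Node nx ny nz → ℝ,
      Sum.elim ψR ψI ⬝ᵥ
        (Matrix.fromBlocks (Vsec nx ny nz Δx Δy Δz)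
          (-(Δt/(2*ℏ)) • Hmat nx ny nz ℏ m Δx Δy Δz U)
          (-(Δt/(2*ℏ)) • Hmat nx ny nz ℏ m Δx Δy Δz U)
          (Vsec nx ny nz Δx Δy Δz)).mulVec (Sum.elim ψR ψI)
      = ∑ c : Fin nz × Fin ny × Fin nx,
          Sum.elim (restr c ψR) (restr c ψI) ⬝ᵥ
            (Matrix.fromBlocks (Vcell Δx Δy Δz)
              (-(Δt/(2*ℏ)) • Hcell nx ny nz ℏ m Δx Δy Δz U c)
              (-(Δt/(2*ℏ)) • Hcell nx ny nz ℏ m Δx Δy Δz U c)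
              (Vcell Δx Δy Δz)).mulVec (Sum.elim (restr c ψR) (restr c ψI)) := by
  intro ψR ψI
  simp only [Matrix.fromBlocks_mulVec, sumElim_dotProduct_sumElim,
    Sum.elim_comp_inl, Sum.elim_comp_inr, dotProduct_add, smul_mulVec,
    dotProduct_smul, smul_eq_mul]
  rw [Finset.sum_add_distrib, Finset.sum_add_distrib, Finset.sum_add_distrib,
    ← Finset.mul_sum, ← Finset.mul_sum,
    ← decompV hnx hny hnz Δx Δy Δz ψR ψR, ← decompV hnx hny hnz Δx Δy Δz ψI ψI,
    ← decompH hnx hny hnz ℏ m Δx Δy Δz U ψR ψI,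
    ← decompH hnx hny hnz ℏ m Δx Δy Δz U ψI ψR]

end
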